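/- Let N ≥ 1, M ≥ 1 and let (d_j), (γ_j), (α_j), (β_j) be real sequences indexed by the integers such that d_j = γ_j + α_j·d_{j+1} + β_j·d_{j-1} for every j with i−M+1 ≤ j ≤ i−1. Suppose c_{1,N}, a_{1,N}, b_{1,N} are real numbers with d_i = c_{1,N} + a_{1,N}·d_{i+N} + b_{1,N}·d_{i-1}. If M ≥ 2 assume 1 − b_{1,N}·α_{i-1} ≠ 0 and define c_{2,N} = (c_{1,N} + b_{1,N}·γ_{i-1})/(1 − b_{1,N}·α_{i-1}), a_{2,N} = a_{1,N}/(1 − b_{1,N}·α_{i-1}), b_{2,N} = b_{1,N}·β_{i-1}/(1 − b_{1,N}·α_{i-1}); and for 2 ≤ m ≤ M−1, assuming b_{m-1,N} ≠ 0 and 1 − α_{i-m}·(b_{m,N}/b_{m-1,N}) ≠ 0, define c_{m+1,N} = [c_{m,N} + b_{m,N}·γ_{i-m} − α_{i-m}·(b_{m,N}/b_{m-1,N})·c_{m-1,N}] / (1 − α_{i-m}·(b_{m,N}/b_{m-1,N})), a_{m+1,N} = [a_{m,N} − α_{i-m}·(b_{m,N}/b_{m-1,N})·a_{m-1,N}]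 / (1 − α_{i-m}·(b_{m,N}/b_{m-1,N})), b_{m+1,N} = b_{m,N}·β_{i-m} / (1 − α_{i-m}·(b_{m,N}/b_{m-1,N})). Then for every m with 1 ≤ m ≤ M one has d_i = c_{m,N} + a_{m,N}·d_{i+N} + b_{m,N}·d_{i-m}. -/

import Mathlib

/-- **Backward extension of the three-term relation between derivative values.**
Given sequences `d, γ, α, β : ℤ → ℝ` satisfying the three-term relation
`d_j = γ_j + α_j d_{j+1} + β_j d_{j-1}` for `i−M+1 ≤ j ≤ i−1`, and an already
established relation `d_i = c_{1,N} + a_{1,N} d_{i+N} + b_{1,N} d_{i-1}`, the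
coefficients `c_{m,N}, a_{m,N}, b_{m,N}` defined by the stated backward
recursion (with the stated nonvanishing assumptions on the denominators)
satisfy `d_i = c_{m,N} + a_{m,N} d_{i+N} + b_{m,N} d_{i-m}` for every
`1 ≤ m ≤ M`. -/
theorem backward_extension_relation
    (N M : ℕ) (hN : 1 ≤ N) (hM : 1 ≤ M) (i : ℤ) (d γ α β : ℤ → ℝ)
    (hrel : ∀ j : ℤ, i - (M : ℤ) + 1 ≤ j → j ≤ i - 1 →
      d j = γ j + α j * d (j + 1) + β j * d (j - 1))
    (c a b : ℕ → ℝ)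
    (h1 : d i = c 1 + a 1 * d (i + (N : ℤ)) + b 1 * d (i - 1))
    (h2 : 2 ≤ M →
      1 - b 1 * α (i - 1) ≠ 0 ∧
      c 2 = (c 1 + b 1 * γ (i - 1)) / (1 - b 1 * α (i - 1)) ∧
      a 2 = a 1 / (1 - b 1 * α (i - 1)) ∧
      b 2 = b 1 * β (i - 1) / (1 - b 1 * α (i - 1)))
    (hrec : ∀ m : ℕ, 2 ≤ m → m ≤ M - 1 →
      b (m - 1) ≠ 0 ∧
      1 - α (i - (m : ℤ)) * (b m / b (m - 1)) ≠ 0 ∧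
      c (m + 1) = (c m + b m * γ (i - (m : ℤ))
                    - α (i - (m : ℤ)) * (b m / b (m - 1)) * c (m - 1)) /
                  (1 - α (i - (m : ℤ)) * (b m / b (m - 1))) ∧
      a (m + 1) = (a m - α (i - (m : ℤ)) * (b m / b (m - 1)) * a (m - 1)) /
                  (1 - α (i - (m : ℤ)) * (b m / b (m - 1))) ∧
      b (m + 1) = b m * β (i - (m : ℤ)) /
                  (1 - α (i - (m : ℤ)) * (b m / b (m - 1)))) :
    ∀ m : ℕ, 1 ≤ m → m ≤ M →
      d i = c m + a m * d (i + (N : ℤ)) + b m * d (i - (m : ℤ)) := by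
  intro m
  induction m using Nat.strong_induction_on with
  | _ m ih =>
    intro hm1 hmM
    match m, hm1, hmM with
    | 1, _, _ => simpa using h1
    | 2, _, hmM =>
      obtain ⟨hq, hc, ha, hb⟩ := h2 hmM
      have hj := hrel (i - 1) (by push_cast; omega) (by omega)
      rw [show i - 1 + 1 = i by ring, show i - 1 - 1 = i - 2 by ring] at hj
      rw [hc, ha, hb]
      push_cast
      field_simp
      linear_combination h1 + b 1 * hj
    | (k+3), _, hmM =>
      set m := k + 2 with hmdef
      obtain ⟨hbne, hqne, hc, ha, hb⟩ := hrec m (by omega) (by omega)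
      have P1 : d i = c m + a m * d (i + (N : ℤ)) + b m * d (i - (m : ℤ)) :=
        ih m (by omega) (by omega) (by omega)
      have P0 : d i = c (m-1) + a (m-1) * d (i + (N : ℤ)) + b (m-1) * d (i - ((m:ℕ) - 1 : ℕ)) :=
        ih (m-1) (by omega) (by omega) (by omega)
      have hcast : ((((m:ℕ) - 1 : ℕ)):ℤ) = (m:ℤ) - 1 := by push_cast [hmdef]; omega
      rw [hcast] at P0
      have hj := hrel (i - (m:ℤ)) (by push_cast; omega) (by omega)
      rw [show i - (m:ℤ) + 1 = i - ((m:ℤ) - 1) by ring,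
          show i - (m:ℤ) - 1 = i - ((m:ℤ) + 1) by ring] at hj
      have hgoalcast : (((k+3 : ℕ)):ℤ) = (m:ℤ) + 1 := by push_cast [hmdef]; ring
      have hbb : b m / b (m - 1) * b (m - 1) = b m := div_mul_cancel₀ _ hbne
      have key : d i * (1 - α (i - (m:ℤ)) * (b m / b (m - 1)))
          = (c m + b m * γ (i - (m:ℤ)) - α (i - (m:ℤ)) * (b m / b (m - 1)) * c (m - 1))
            + (a m - α (i - (m:ℤ)) * (b m / b (m - 1)) * a (m - 1)) * d (i + (N : ℤ))
            + b m * β (i - (m:ℤ)) * d (i - ((m:ℤ) + 1)) := by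
        linear_combination P1 + b m * hj - α (i - (m:ℤ)) * (b m / b (m - 1)) * P0
          - α (i - (m:ℤ)) * d (i - ((m:ℤ) - 1)) * hbb
      have hgc : (((k+3:ℕ)):ℤ) = (m:ℤ) + 1 := by push_cast [hmdef]; ring
      rw [show (k+3 : ℕ) = m + 1 from rfl, hgc, hc, ha, hb,
        div_mul_eq_mul_div, div_mul_eq_mul_div, ← add_div, ← add_div,
        eq_div_iff hqne]
      linear_combination key
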